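/- Suppose additionally a discrete group H acts continuously on P preserving μ, with no nonempty compact H-invariant subsets. For each compact F ⊆ P let N_F = {η ∈ Γ : η(x) = 0 for all x ∈ F}. Then F ↦ N_F is a bijection from the set of compact subsets of P onto the set of nonzero order ideals of (Γ, Γ₊). -/

import Mathlib

open Set MeasureTheory

/-- Membership in the group `Γ`: `η : P → ℝ` is locally constant (continuous into the
discrete group `Δ`), takes values in `Δ`, and differs from some constant `r ∈ Δ` by a
compactly supported function of integral zero. -/
def MemGamma {P : Type*} [TopologicalSpace P] [MeasurableSpace P]
    (μ : Measure P) (Δ : AddSubgroup ℝ) (η : P → ℝ) : Prop :=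
  IsLocallyConstant η ∧ (∀ x, η x ∈ Δ) ∧
    ∃ r ∈ Δ, HasCompactSupport (fun x => η x - r) ∧ (∫ x, (η x - r) ∂μ) = 0

/-- `N` is an order ideal of `(Γ, Γ₊)`: a subgroup of `Γ` generated by its positive
part, which is hereditary: `η ∈ N` and `0 ≤ ν ≤ η` (with `ν ∈ Γ`) imply `ν ∈ N`. -/
def IsOrderIdealGamma {P : Type*} [TopologicalSpace P] [MeasurableSpace P]
    (μ : Measure P) (Δ : AddSubgroup ℝ) (N : Set (P → ℝ)) : Prop :=
  (∀ η ∈ N, MemGamma μ Δ η) ∧ (0 : P → ℝ) ∈ N ∧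
  (∀ η₁ ∈ N, ∀ η₂ ∈ N, η₁ - η₂ ∈ N) ∧
  (∀ η ∈ N, ∃ η₁ ∈ N, ∃ η₂ ∈ N,
    (∀ x, 0 ≤ η₁ x) ∧ (∀ x, 0 ≤ η₂ x) ∧ η = η₁ - η₂) ∧
  (∀ η ∈ N, ∀ ν : P → ℝ, MemGamma μ Δ ν → (∀ x, 0 ≤ ν x) → (∀ x, ν x ≤ η x) → ν ∈ N)

set_option linter.unusedSectionVars false
set_option maxHeartbeats 1000000

section AuxGamma

variable {P : Type*} [TopologicalSpace P] [T2Space P] [LocallyCompactSpace P]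
    [TotallyDisconnectedSpace P] [MeasurableSpace P] [BorelSpace P]
    {μ : Measure P} {Δ : AddSubgroup ℝ}




lemma my_exists_compactOpen {x : P} {U : Set P} (hU : IsOpen U) (hx : x ∈ U) :
    ∃ K : Set P, IsCompact K ∧ IsOpen K ∧ x ∈ K ∧ K ⊆ U := by
  obtain ⟨s, s_comp, xs, sU⟩ := exists_compact_subset hU hx
  obtain ⟨V, hV, hxV, hVs⟩ :=
    loc_compact_Haus_tot_disc_of_zero_dim.mem_nhds_iff.1 (isOpen_interior.mem_nhds xs)
  exact ⟨V, s_comp.of_isClosed_subset hV.1 (hVs.trans interior_subset), hV.2, hxV,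
    (hVs.trans interior_subset).trans sU⟩

lemma my_compl_nonempty [NoncompactSpace P] {K : Set P} (hK : IsCompact K) : Kᶜ.Nonempty := by
  rcases eq_empty_or_nonempty Kᶜ with h | h
  · exact absurd (by rwa [compl_empty_iff.mp h] at hK) (noncompact_univ P)
  · exact h

lemma my_isLocallyConstant_indicator {S : Set P} (hS : IsClopen S) (c : ℝ) :
    IsLocallyConstant (S.indicator fun _ => c) := by
  rw [IsLocallyConstant.iff_exists_open]
  intro x
  by_cases hx : x ∈ S
  · exact ⟨S, hS.2, hx, fun y hy => by
      rw [Set.indicator_of_mem hy, Set.indicator_of_mem hx]⟩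
  · exact ⟨Sᶜ, hS.1.isOpen_compl, hx, fun y hy => by
      rw [Set.indicator_of_notMem (notMem_of_mem_compl hy), Set.indicator_of_notMem hx]⟩

lemma lc_integrable {μ : Measure P} (hμfin : ∀ K : Set P, IsCompact K → μ K ≠ ⊤) {g : P → ℝ}
    (hg : IsLocallyConstant g) (hs : HasCompactSupport g) : Integrable g μ :=
  haveI : IsFiniteMeasureOnCompacts μ := ⟨fun _K hK => (hμfin _ hK).lt_top⟩
  hg.continuous.integrable_of_hasCompactSupport hs

lemma indicator_integrable {μ : Measure P} (hμfin : ∀ K : Set P, IsCompact K → μ K ≠ ⊤)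
    {S : Set P} (hS : IsCompact S) (hSm : MeasurableSet S) (c : ℝ) :
    Integrable (S.indicator fun _ => c) μ :=
  (integrable_indicator_iff hSm).2 (integrableOn_const (hμfin S hS))




lemma integral_mem_delta {μ : Measure P} (hμfin : ∀ K : Set P, IsCompact K → μ K ≠ ⊤)
    {Δ : AddSubgroup ℝ}
    (hΔmul : ∀ r ∈ Δ, ∀ K : Set P, IsCompact K → IsOpen K → (μ K).toReal * r ∈ Δ)
    {g : P → ℝ} (hg : IsLocallyConstant g) (hs : HasCompactSupport g)
    (hval : ∀ x, g x ∈ Δ) : (∫ x, g x ∂μ) ∈ Δ := by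
  classical
  set A : Set P := {x | g x ≠ 0} with hA
  have hAopen : IsOpen A := by
    have : A = g ⁻¹' ({0}ᶜ) := rfl
    rw [this]
    exact hg.continuous.isOpen_preimage _ isOpen_compl_singleton
  have hAclosed : IsClosed A := by
    have : A = {x | g x = 0}ᶜ := rfl
    rw [this]
    exact (hg.isOpen_fiber 0).isClosed_compl
  have hAcomp : IsCompact A :=
    IsCompact.of_isClosed_subset hs hAclosed (subset_tsupport g)
  obtain ⟨t, ht⟩ := hAcomp.elim_finite_subcover (fun x : P => {y | g y = g x})
    (fun x => hg.isOpen_fiber (g x)) (fun x _hx => mem_iUnion.2 ⟨x, rfl⟩)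
  set s : Finset ℝ := t.image g with hsdef
  have key : ∀ x : P, g x = ∑ v ∈ s, ({y | g y = v} ∩ A).indicator (fun _ => v) x := by
    intro x
    by_cases hx : x ∈ A
    · have hgx : g x ∈ s := by
        obtain ⟨i, hi, hxi⟩ := mem_iUnion₂.1 (ht hx)
        exact Finset.mem_image.2 ⟨i, hi, hxi.symm⟩
      rw [Finset.sum_eq_single (g x)]
      · exact (Set.indicator_of_mem (Set.mem_inter (show x ∈ {y | g y = g x} from rfl) hx) _).symm
      · intro v _hv hne
        exact Set.indicator_of_notMem (fun h => hne h.1.symm) _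
      · intro h; exact absurd hgx h
    · have hgx : g x = 0 := not_not.1 hx
      rw [hgx]
      refine (Finset.sum_eq_zero fun v _hv => ?_).symm
      exact Set.indicator_of_notMem (fun h => hx h.2) _
  have hsets : ∀ v : ℝ, IsCompact ({y | g y = v} ∩ A) ∧ IsOpen ({y | g y = v} ∩ A) := by
    intro v
    refine ⟨IsCompact.of_isClosed_subset hAcomp
      ((hg.isClosed_fiber v).inter hAclosed) inter_subset_right,
      (hg.isOpen_fiber v).inter hAopen⟩
  have hint : ∀ v ∈ s, Integrable (({y | g y = v} ∩ A).indicator (fun _ => v)) μ := by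
    intro v _
    exact indicator_integrable hμfin (hsets v).1 (hsets v).2.measurableSet v
  rw [show (fun x => g x) = fun x => ∑ v ∈ s, ({y | g y = v} ∩ A).indicator (fun _ => v) x
    from funext key]
  rw [integral_finset_sum s hint]
  refine AddSubgroup.sum_mem _ fun v _hv => ?_
  rw [integral_indicator_const v (hsets v).2.measurableSet, smul_eq_mul]
  rcases eq_empty_or_nonempty ({y | g y = v} ∩ A) with h | ⟨x0, hx0⟩
  · rw [h]; simpa using zero_mem Δ
  · exact hΔmul v (hx0.1 ▸ hval x0) _ (hsets v).1 (hsets v).2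




lemma memGamma_zero : MemGamma μ Δ (0 : P → ℝ) := by
  refine ⟨IsLocallyConstant.of_constant _ fun _ _ => rfl, fun _ => zero_mem _, 0, zero_mem _,
    HasCompactSupport.intro isCompact_empty (fun x _ => by simp), by simp⟩

lemma MemGamma.sub' (hμfin : ∀ K : Set P, IsCompact K → μ K ≠ ⊤)
    {η₁ η₂ : P → ℝ} (h₁ : MemGamma μ Δ η₁) (h₂ : MemGamma μ Δ η₂) :
    MemGamma μ Δ (η₁ - η₂) := by
  obtain ⟨lc₁, val₁, r₁, hr₁, hs₁, hi₁⟩ := h₁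
  obtain ⟨lc₂, val₂, r₂, hr₂, hs₂, hi₂⟩ := h₂
  have hlc₁ : IsLocallyConstant fun x => η₁ x - r₁ := lc₁.comp (fun t => t - r₁)
  have hlc₂ : IsLocallyConstant fun x => η₂ x - r₂ := lc₂.comp (fun t => t - r₂)
  have hkey : (fun x => (η₁ - η₂) x - (r₁ - r₂)) =
      fun x => (η₁ x - r₁) - (η₂ x - r₂) := by
    funext x
    simp only [Pi.sub_apply]
    ring
  refine ⟨lc₁.comp₂ lc₂ (· - ·), fun x => sub_mem (val₁ x) (val₂ x), r₁ - r₂,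
    sub_mem hr₁ hr₂, ?_, ?_⟩
  · rw [hkey]
    refine HasCompactSupport.intro (hs₁.union hs₂) fun x hx => ?_
    have e₁ : η₁ x - r₁ = 0 :=
      image_eq_zero_of_notMem_tsupport (f := fun x => η₁ x - r₁) (fun h => hx (mem_union_left _ h))
    have e₂ : η₂ x - r₂ = 0 :=
      image_eq_zero_of_notMem_tsupport (f := fun x => η₂ x - r₂) (fun h => hx (mem_union_right _ h))
    simp [e₁, e₂]
  · have : (∫ x, ((η₁ - η₂) x - (r₁ - r₂)) ∂μ) =
        ∫ x, ((η₁ x - r₁) - (η₂ x - r₂)) ∂μ := by rw [hkey]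
    rw [this, integral_sub (lc_integrable hμfin hlc₁ hs₁) (lc_integrable hμfin hlc₂ hs₂),
      hi₁, hi₂, sub_zero]

lemma MemGamma.add' (hμfin : ∀ K : Set P, IsCompact K → μ K ≠ ⊤)
    {η₁ η₂ : P → ℝ} (h₁ : MemGamma μ Δ η₁) (h₂ : MemGamma μ Δ η₂) :
    MemGamma μ Δ (η₁ + η₂) := by
  have h := h₁.sub' hμfin (memGamma_zero.sub' hμfin h₂)
  rwa [show η₁ - ((0 : P → ℝ) - η₂) = η₁ + η₂ from funext fun x => by
    simp [Pi.sub_apply]] at h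

lemma subset_L {L : ℕ → Set P} (hLmono : Monotone L) (hLopen : ∀ n, IsOpen (L n))
    (hLunion : (⋃ n, L n) = univ) {C : Set P} (hC : IsCompact C) : ∃ n, C ⊆ L n := by
  obtain ⟨t, ht⟩ := hC.elim_finite_subcover L hLopen (by rw [hLunion]; exact subset_univ C)
  refine ⟨t.sup id, fun x hx => ?_⟩
  obtain ⟨n, hn, hxn⟩ := mem_iUnion₂.1 (ht hx)
  exact hLmono (Finset.le_sup (f := id) hn) hxn

lemma r_nonneg [NoncompactSpace P] {η : P → ℝ} {r : ℝ} (hpos : ∀ x, 0 ≤ η x)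
    (hs : HasCompactSupport fun x => η x - r) : 0 ≤ r := by
  have hcompl : (tsupport fun x => η x - r)ᶜ.Nonempty := by
    rcases eq_empty_or_nonempty (tsupport fun x => η x - r)ᶜ with h | h
    · exfalso
      apply noncompact_univ P
      rw [← compl_empty_iff.mp h]
      exact hs
    · exact h
  obtain ⟨x, hx⟩ := hcompl
  have := image_eq_zero_of_notMem_tsupport (f := fun x => η x - r) hx
  linarith [hpos x]

lemma eq_zero_of_nonneg (hμpos : ∀ U : Set P, IsOpen U → U.Nonempty → 0 < μ U)
    (hμfin : ∀ K : Set P, IsCompact K → μ K ≠ ⊤) {η : P → ℝ} (hlc : IsLocallyConstant η)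
    (hpos : ∀ x, 0 ≤ η x) (hsupp : HasCompactSupport η) (hint : (∫ x, η x ∂μ) = 0) :
    η = 0 := by
  by_contra h
  obtain ⟨x₀, hx₀⟩ : ∃ x, η x ≠ 0 := by
    by_contra h'; push_neg at h'; exact h (funext h')
  have hx₀pos : 0 < η x₀ := (hpos x₀).lt_of_ne (Ne.symm hx₀)
  set U := {y | η y = η x₀} with hU
  have hUopen : IsOpen U := hlc.isOpen_fiber (η x₀)
  have hUsub : U ⊆ tsupport η := fun y hy =>
    subset_tsupport η (by simp only [Function.mem_support, hU]; rw [hy]; exact hx₀)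
  have hμU : μ U ≠ ⊤ := fun h' =>
    hμfin _ hsupp (eq_top_iff.2 (h' ▸ measure_mono hUsub))
  have hμU0 : μ U ≠ 0 := (hμpos U hUopen ⟨x₀, rfl⟩).ne'
  have hle : ∀ x, U.indicator (fun _ => η x₀) x ≤ η x := by
    intro x
    by_cases hx : x ∈ U
    · rw [Set.indicator_of_mem hx]; exact (show η x = η x₀ from hx).ge
    · rw [Set.indicator_of_notMem hx]; exact hpos x
  have hind : Integrable (U.indicator fun _ => η x₀) μ :=
    (integrable_indicator_iff hUopen.measurableSet).2
      (integrableOn_const hμU)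
  have hint2 := integral_mono hind (lc_integrable hμfin hlc hsupp) hle
  rw [integral_indicator_const _ hUopen.measurableSet, hint, smul_eq_mul] at hint2
  nlinarith [mul_pos (ENNReal.toReal_pos hμU0 hμU) hx₀pos, measureReal_def μ U]




lemma exists_pos_at [NoncompactSpace P]
    (hμpos : ∀ U : Set P, IsOpen U → U.Nonempty → 0 < μ U)
    (hμfin : ∀ K : Set P, IsCompact K → μ K ≠ ⊤)
    (hΔone : (1 : ℝ) ∈ Δ)
    (hΔmul : ∀ r ∈ Δ, ∀ K : Set P, IsCompact K → IsOpen K → (μ K).toReal * r ∈ Δ)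
    {F : Set P} (hF : IsCompact F) {x₀ : P} (hx₀ : x₀ ∉ F) :
    ∃ η : P → ℝ, MemGamma μ Δ η ∧ (∀ x ∈ F, η x = 0) ∧ 0 < η x₀ := by
  obtain ⟨K, hKc, hKo, hxK, hKF⟩ := my_exists_compactOpen hF.isClosed.isOpen_compl hx₀
  obtain ⟨y, hy⟩ := my_compl_nonempty (hF.union hKc)
  obtain ⟨K', hK'c, hK'o, hyK', hK'sub⟩ :=
    my_exists_compactOpen (hF.union hKc).isClosed.isOpen_compl hy
  have hdisj : ∀ x, x ∈ K → x ∉ K' := fun x hx hx' => hK'sub hx' (Or.inr hx)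
  have hK'F : ∀ x, x ∈ F → x ∉ K' := fun x hx hx' => hK'sub hx' (Or.inl hx)
  have hKF' : ∀ x, x ∈ F → x ∉ K := fun x hx hx' => hKF hx' hx
  set a := (μ K').toReal with hadef
  set b := (μ K).toReal with hbdef
  have ha : 0 < a := ENNReal.toReal_pos (hμpos K' hK'o ⟨y, hyK'⟩).ne' (hμfin _ hK'c)
  have hb : 0 < b := ENNReal.toReal_pos (hμpos K hKo ⟨x₀, hxK⟩).ne' (hμfin _ hKc)
  have haΔ : a ∈ Δ := by simpa using hΔmul 1 hΔone K' hK'c hK'o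
  have hbΔ : b ∈ Δ := by simpa using hΔmul 1 hΔone K hKc hKo
  set η : P → ℝ := fun x => K.indicator (fun _ => a) x - K'.indicator (fun _ => b) x with hηdef
  have hint1 : Integrable (K.indicator fun _ => a) μ :=
    indicator_integrable hμfin hKc hKo.measurableSet a
  have hint2 : Integrable (K'.indicator fun _ => b) μ :=
    indicator_integrable hμfin hK'c hK'o.measurableSet b
  refine ⟨η, ⟨?_, ?_, 0, zero_mem _, ?_, ?_⟩, ?_, ?_⟩
  · exact (my_isLocallyConstant_indicator ⟨hKc.isClosed, hKo⟩ a).comp₂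
      (my_isLocallyConstant_indicator ⟨hK'c.isClosed, hK'o⟩ b) (· - ·)
  · intro x
    by_cases hx : x ∈ K
    · rw [hηdef]
      simp only [Set.indicator_of_mem hx, Set.indicator_of_notMem (hdisj x hx), sub_zero]
      exact haΔ
    · by_cases hx' : x ∈ K'
      · rw [hηdef]
        simp only [Set.indicator_of_notMem hx, Set.indicator_of_mem hx', zero_sub]
        exact neg_mem hbΔ
      · rw [hηdef]
        simp only [Set.indicator_of_notMem hx, Set.indicator_of_notMem hx', sub_zero]
        exact zero_mem _
  · refine HasCompactSupport.intro (hKc.union hK'c) fun x hx => ?_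
    have hx1 : x ∉ K := fun h => hx (Or.inl h)
    have hx2 : x ∉ K' := fun h => hx (Or.inr h)
    simp [hηdef, Set.indicator_of_notMem hx1, Set.indicator_of_notMem hx2]
  · have : (fun x => η x - 0) = η := by funext x; rw [sub_zero]
    rw [this, hηdef]
    rw [integral_sub hint1 hint2, integral_indicator_const _ hKo.measurableSet,
      integral_indicator_const _ hK'o.measurableSet, smul_eq_mul, smul_eq_mul,
      measureReal_def, measureReal_def, ← hadef, ← hbdef]
    ring
  · intro x hx
    simp [hηdef, Set.indicator_of_notMem (hKF' x hx), Set.indicator_of_notMem (hK'F x hx)]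
  · have h1 : x₀ ∉ K' := hdisj x₀ hxK
    simp only [hηdef, Set.indicator_of_mem hxK, Set.indicator_of_notMem h1, sub_zero]
    exact ha


lemma decomp [NoncompactSpace P]
    (hμpos : ∀ U : Set P, IsOpen U → U.Nonempty → 0 < μ U)
    (hμfin : ∀ K : Set P, IsCompact K → μ K ≠ ⊤)
    {L : ℕ → Set P} (hLmono : Monotone L)
    (hL : ∀ n, IsCompact (L n) ∧ IsOpen (L n) ∧ (L n).Nonempty)
    (hLunion : (⋃ n, L n) = univ)
    (hΔone : (1 : ℝ) ∈ Δ)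
    (hΔmul : ∀ r ∈ Δ, ∀ K : Set P, IsCompact K → IsOpen K → (μ K).toReal * r ∈ Δ)
    (hΔdiv : ∀ r ∈ Δ, ∀ n : ℕ, ((μ (L n)).toReal)⁻¹ * r ∈ Δ)
    {F : Set P} (hF : IsCompact F) {ν : P → ℝ} (hν : MemGamma μ Δ ν)
    (hνF : ∀ x ∈ F, ν x = 0) :
    ∃ ν₁ ν₂ : P → ℝ, MemGamma μ Δ ν₁ ∧ MemGamma μ Δ ν₂ ∧ (∀ x ∈ F, ν₁ x = 0) ∧
      (∀ x ∈ F, ν₂ x = 0) ∧ (∀ x, 0 ≤ ν₁ x) ∧ (∀ x, 0 ≤ ν₂ x) ∧ ν = ν₁ - ν₂ := by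
  obtain ⟨hlc, hval, r, hrΔ, hsupp, hint⟩ := hν
  -- the positive part, shifted
  set g : P → ℝ := fun x => max (ν x) 0 - max r 0 with hgdef
  have hg_lc : IsLocallyConstant g := hlc.comp (fun t => max t 0 - max r 0)
  have hg_supp : HasCompactSupport g := by
    refine HasCompactSupport.intro (K := tsupport fun x => ν x - r) hsupp fun x hx => ?_
    have : ν x - r = 0 := image_eq_zero_of_notMem_tsupport (f := fun x => ν x - r) hx
    have hxr : ν x = r := by linarith
    simp [hgdef, hxr]
  have hmaxΔ : ∀ x, max (ν x) 0 ∈ Δ := by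
    intro x
    rcases le_total (ν x) 0 with h | h
    · rw [max_eq_right h]; exact zero_mem _
    · rw [max_eq_left h]; exact hval x
  have hrmaxΔ : max r 0 ∈ Δ := by
    rcases le_total r 0 with h | h
    · rw [max_eq_right h]; exact zero_mem _
    · rw [max_eq_left h]; exact hrΔ
  have hg_val : ∀ x, g x ∈ Δ := fun x => sub_mem (hmaxΔ x) hrmaxΔ
  set a := ∫ x, g x ∂μ with hadef
  have haΔ : a ∈ Δ := integral_mem_delta hμfin hΔmul hg_lc hg_supp hg_val
  -- auxiliary compact open set disjoint from F
  obtain ⟨z, hz⟩ := my_compl_nonempty hF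
  obtain ⟨K₀, hK₀c, hK₀o, hzK₀, hK₀F⟩ := my_exists_compactOpen hF.isClosed.isOpen_compl hz
  set m₀ := (μ K₀).toReal with hm₀def
  have hm₀ : 0 < m₀ := ENNReal.toReal_pos (hμpos K₀ hK₀o ⟨z, hzK₀⟩).ne' (hμfin _ hK₀c)
  -- a big L n
  obtain ⟨n, hn⟩ := subset_L hLmono (fun m => (hL m).2.1) hLunion
    ((hF.union hK₀c).union hg_supp)
  have hFL : F ⊆ L n := fun x hx => hn (Or.inl (Or.inl hx))
  have hK₀L : K₀ ⊆ L n := fun x hx => hn (Or.inl (Or.inr hx))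
  have hgL : tsupport g ⊆ L n := fun x hx => hn (Or.inr hx)
  have hLno : IsOpen (L n) := (hL n).2.1
  have hLnc : IsCompact (L n) := (hL n).1
  have hLn0 : (μ (L n)).toReal ≠ 0 :=
    (ENNReal.toReal_pos (hμpos _ hLno (hL n).2.2).ne' (hμfin _ hLnc)).ne'
  -- the integer k
  obtain ⟨k, hk⟩ := exists_nat_ge (-a / m₀)
  have hka : 0 ≤ a + k * m₀ := by
    rw [div_le_iff₀ hm₀] at hk
    linarith
  have hkΔ : ((k : ℕ) : ℝ) ∈ Δ := by
    have := AddSubgroup.nsmul_mem Δ hΔone k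
    simpa [nsmul_eq_mul] using this
  have hkmΔ : (k : ℝ) * m₀ ∈ Δ := by
    have := hΔmul _ hkΔ K₀ hK₀c hK₀o
    rwa [mul_comm] at this
  set c₂ := ((μ (L n)).toReal)⁻¹ * (a + k * m₀) with hc₂def
  have hc₂Δ : c₂ ∈ Δ := hΔdiv _ (add_mem haΔ hkmΔ) n
  have hc₂0 : 0 ≤ c₂ := mul_nonneg (inv_nonneg.2 ENNReal.toReal_nonneg) hka
  -- the correction function
  set φ : P → ℝ := fun x =>
    K₀.indicator (fun _ => (k : ℝ)) x + (L n)ᶜ.indicator (fun _ => c₂) x with hφdef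
  have hLnclopen : IsClopen (L n) := ⟨hLnc.isClosed, hLno⟩
  have hφ_lc : IsLocallyConstant φ :=
    (my_isLocallyConstant_indicator ⟨hK₀c.isClosed, hK₀o⟩ _).comp₂
      (my_isLocallyConstant_indicator hLnclopen.compl _) (· + ·)
  have hφ_nonneg : ∀ x, 0 ≤ φ x := fun x =>
    add_nonneg (Set.indicator_nonneg (fun _ _ => Nat.cast_nonneg k) x)
      (Set.indicator_nonneg (fun _ _ => hc₂0) x)
  have hφ_F : ∀ x ∈ F, φ x = 0 := by
    intro x hx
    have h1 : x ∉ K₀ := fun h => hK₀F h hx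
    have h2 : x ∉ (L n)ᶜ := fun h => h (hFL hx)
    simp [hφdef, Set.indicator_of_notMem h1, Set.indicator_of_notMem h2]
  have hφ_val : ∀ x, φ x ∈ Δ := by
    intro x
    by_cases hxL : x ∈ L n
    · have h2 : x ∉ (L n)ᶜ := fun h => h hxL
      by_cases hxK : x ∈ K₀
      · simp only [hφdef, Set.indicator_of_mem hxK, Set.indicator_of_notMem h2, add_zero]
        exact hkΔ
      · simp only [hφdef, Set.indicator_of_notMem hxK, Set.indicator_of_notMem h2, add_zero]
        exact zero_mem _
    · have h1 : x ∉ K₀ := fun h => hxL (hK₀L h)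
      simp only [hφdef, Set.indicator_of_notMem h1, Set.indicator_of_mem (mem_compl hxL),
        zero_add]
      exact hc₂Δ
  -- the first function
  set ν₁ : P → ℝ := fun x => max (ν x) 0 + φ x with hν₁def
  set r₁ : ℝ := max r 0 + c₂ with hr₁def
  have hν₁_lc : IsLocallyConstant ν₁ := (hlc.comp fun t => max t 0).comp₂ hφ_lc (· + ·)
  have hkey : ∀ x, ν₁ x - r₁ = g x +
      (K₀.indicator (fun _ => (k : ℝ)) x - (L n).indicator (fun _ => c₂) x) := by
    intro x
    by_cases hxL : x ∈ L n
    · have h2 : x ∉ (L n)ᶜ := fun h => h hxL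
      simp only [hν₁def, hr₁def, hgdef, hφdef, Set.indicator_of_notMem h2,
        Set.indicator_of_mem hxL, add_zero]
      ring
    · have h1 : x ∉ K₀ := fun h => hxL (hK₀L h)
      have hgx : g x = 0 := image_eq_zero_of_notMem_tsupport (fun h => hxL (hgL h))
      simp only [hν₁def, hr₁def, hgdef, hφdef, Set.indicator_of_notMem h1,
        Set.indicator_of_mem (mem_compl hxL), Set.indicator_of_notMem hxL, zero_add]
      rw [hgdef] at hgx
      simp only at hgx
      linarith [hgx]
  have hik : Integrable (K₀.indicator fun _ => (k : ℝ)) μ :=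
    indicator_integrable hμfin hK₀c hK₀o.measurableSet _
  have hiL : Integrable ((L n).indicator fun _ => c₂) μ :=
    indicator_integrable hμfin hLnc hLno.measurableSet _
  have hsupp₁ : HasCompactSupport fun x => ν₁ x - r₁ := by
    refine HasCompactSupport.intro (K := L n) hLnc fun x hx => ?_
    rw [hkey x]
    have h1 : x ∉ K₀ := fun h => hx (hK₀L h)
    have hgx : g x = 0 := image_eq_zero_of_notMem_tsupport (fun h => hx (hgL h))
    simp [hgx, Set.indicator_of_notMem h1, Set.indicator_of_notMem hx]
  have hint₁ : (∫ x, (ν₁ x - r₁) ∂μ) = 0 := by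
    have : (fun x => ν₁ x - r₁) = fun x =>
        g x + (K₀.indicator (fun _ => (k : ℝ)) x - (L n).indicator (fun _ => c₂) x) :=
      funext hkey
    have hsubint : Integrable
        (fun x => K₀.indicator (fun _ => (k : ℝ)) x - (L n).indicator (fun _ => c₂) x) μ :=
      hik.sub hiL
    rw [this, integral_add (lc_integrable hμfin hg_lc hg_supp) hsubint,
      integral_sub hik hiL, integral_indicator_const _ hK₀o.measurableSet,
      integral_indicator_const _ hLno.measurableSet, smul_eq_mul, smul_eq_mul, measureReal_def, measureReal_def, ← hadef]
    have hmul : (μ (L n)).toReal * c₂ = a + k * m₀ := by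
      rw [hc₂def, ← mul_assoc, mul_inv_cancel₀ hLn0, one_mul]
    rw [← hm₀def, hmul]
    ring
  have hν₁mem : MemGamma μ Δ ν₁ :=
    ⟨hν₁_lc, fun x => add_mem (hmaxΔ x) (hφ_val x), r₁, add_mem hrmaxΔ hc₂Δ, hsupp₁, hint₁⟩
  have hν₁F : ∀ x ∈ F, ν₁ x = 0 := by
    intro x hx
    simp [hν₁def, hνF x hx, hφ_F x hx]
  have hν₁pos : ∀ x, 0 ≤ ν₁ x := fun x =>
    add_nonneg (le_max_right _ _) (hφ_nonneg x)
  have hνle : ∀ x, ν x ≤ ν₁ x := fun x =>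
    le_trans (le_max_left _ _) (le_add_of_nonneg_right (hφ_nonneg x))
  refine ⟨ν₁, ν₁ - ν, hν₁mem, hν₁mem.sub' hμfin ⟨hlc, hval, r, hrΔ, hsupp, hint⟩, hν₁F,
    ?_, hν₁pos, ?_, ?_⟩
  · intro x hx
    simp [Pi.sub_apply, hν₁F x hx, hνF x hx]
  · intro x
    simp only [Pi.sub_apply]
    linarith [hνle x]
  · funext x
    simp only [Pi.sub_apply]
    ring




/-- Any nonzero order ideal contains a nonnegative element with positive value at
infinity. -/
lemma exists_pos_infty [NoncompactSpace P]
    (hμpos : ∀ U : Set P, IsOpen U → U.Nonempty → 0 < μ U)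
    (hμfin : ∀ K : Set P, IsCompact K → μ K ≠ ⊤)
    {N : Set (P → ℝ)} (hN : IsOrderIdealGamma μ Δ N) (hne : ∃ η ∈ N, η ≠ 0) :
    ∃ η₀ ∈ N, (∀ x, 0 ≤ η₀ x) ∧ ∃ r₀ : ℝ, 0 < r₀ ∧
      HasCompactSupport (fun x => η₀ x - r₀) := by
  obtain ⟨η, hηN, hηne⟩ := hne
  obtain ⟨η₁, h₁N, η₂, h₂N, h₁pos, h₂pos, hdec⟩ := hN.2.2.2.1 η hηN
  obtain ⟨lc₁, _, r₁, _, hs₁, hi₁⟩ := hN.1 η₁ h₁N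
  obtain ⟨lc₂, _, r₂, _, hs₂, hi₂⟩ := hN.1 η₂ h₂N
  have hr₁0 : 0 ≤ r₁ := r_nonneg h₁pos hs₁
  have hr₂0 : 0 ≤ r₂ := r_nonneg h₂pos hs₂
  rcases hr₁0.lt_or_eq with h | h
  · exact ⟨η₁, h₁N, h₁pos, r₁, h, hs₁⟩
  · rcases hr₂0.lt_or_eq with h' | h'
    · exact ⟨η₂, h₂N, h₂pos, r₂, h', hs₂⟩
    · exfalso
      rw [← h] at hs₁ hi₁
      rw [← h'] at hs₂ hi₂
      simp only [sub_zero] at hs₁ hi₁ hs₂ hi₂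
      have e₁ : η₁ = 0 := eq_zero_of_nonneg hμpos hμfin lc₁ h₁pos hs₁ hi₁
      have e₂ : η₂ = 0 := eq_zero_of_nonneg hμpos hμfin lc₂ h₂pos hs₂ hi₂
      apply hηne
      rw [hdec, e₁, e₂, sub_zero]

lemma ideal_add {N : Set (P → ℝ)} (hN : IsOrderIdealGamma μ Δ N)
    {a b : P → ℝ} (ha : a ∈ N) (hb : b ∈ N) : a + b ∈ N := by
  have h0 := hN.2.1
  have h1 : (0 : P → ℝ) - b ∈ N := hN.2.2.1 0 h0 b hb
  have h2 : a - ((0 : P → ℝ) - b) ∈ N := hN.2.2.1 a ha _ h1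
  rwa [show a - ((0 : P → ℝ) - b) = a + b from funext fun x => by simp [Pi.sub_apply]] at h2

lemma ideal_nsmul {N : Set (P → ℝ)} (hN : IsOrderIdealGamma μ Δ N)
    {a : P → ℝ} (ha : a ∈ N) (m : ℕ) : (fun x => (m : ℝ) * a x) ∈ N := by
  induction m with
  | zero => simp only [Nat.cast_zero, zero_mul]; exact hN.2.1
  | succ m ih =>
      have := ideal_add hN ih ha
      rwa [show (fun x => ((m : ℝ)) * a x) + a = fun x => ((m + 1 : ℕ) : ℝ) * a x from
        funext fun x => by simp only [Pi.add_apply]; push_cast; ring] at this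

lemma ideal_sum {N : Set (P → ℝ)} (hN : IsOrderIdealGamma μ Δ N)
    {ι : Type*} (t : Finset ι) (f : ι → (P → ℝ)) (hf : ∀ i ∈ t, f i ∈ N) :
    (∑ i ∈ t, f i) ∈ N := by
  classical
  induction t using Finset.induction_on with
  | empty => simpa using hN.2.1
  | insert _ _ hnotmem ih =>
      rw [Finset.sum_insert hnotmem]
      exact ideal_add hN (hf _ (Finset.mem_insert_self _ _))
        (ih fun i hi => hf i (Finset.mem_insert_of_mem hi))


lemma dominated_mem [NoncompactSpace P]
    (hμpos : ∀ U : Set P, IsOpen U → U.Nonempty → 0 < μ U)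
    (hμfin : ∀ K : Set P, IsCompact K → μ K ≠ ⊤)
    {N : Set (P → ℝ)} (hN : IsOrderIdealGamma μ Δ N) (hne : ∃ η ∈ N, η ≠ 0)
    {ν : P → ℝ} (hν : MemGamma μ Δ ν) (hνpos : ∀ x, 0 ≤ ν x)
    (hνF : ∀ x : P, (∀ η ∈ N, η x = 0) → ν x = 0) : ν ∈ N := by
  classical
  obtain ⟨η₀, hη₀N, hη₀pos, r₀, hr₀pos, hs₀⟩ := exists_pos_infty hμpos hμfin hN hne
  obtain ⟨lcν, valν, c, hcΔ, hsν, hiν⟩ := hν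
  set C := tsupport (fun x => ν x - c) with hCdef
  set C₀ := tsupport (fun x => η₀ x - r₀) with hC₀def
  have hCc : IsCompact C := hsν
  have hC₀c : IsCompact C₀ := hs₀
  obtain ⟨M, hM⟩ : BddAbove (ν '' C) := (hCc.image lcν.continuous).bddAbove
  set M' := max M c with hM'def
  have hνM : ∀ x, ν x ≤ M' := by
    intro x
    by_cases hx : x ∈ C
    · exact le_trans (hM ⟨x, hx, rfl⟩) (le_max_left _ _)
    · have h1 : ν x - c = 0 := image_eq_zero_of_notMem_tsupport (f := fun x => ν x - c) hx
      have h2 : ν x = c := by linarith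
      rw [h2]; exact le_max_right _ _
  set E := (C ∪ C₀) ∩ {x | ν x ≠ 0} with hEdef
  have hEclosed : IsClosed E := by
    refine IsClosed.inter ((isClosed_tsupport _).union (isClosed_tsupport _)) ?_
    have : {x | ν x ≠ 0} = {x | ν x = 0}ᶜ := rfl
    rw [this]
    exact (lcν.isOpen_fiber 0).isClosed_compl
  have hEcomp : IsCompact E :=
    IsCompact.of_isClosed_subset (hCc.union hC₀c) hEclosed inter_subset_left
  have hζex : ∀ i : ↥E, ∃ ζ : P → ℝ, ζ ∈ N ∧ (∀ y, 0 ≤ ζ y) ∧ 0 < ζ (i : P) := by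
    rintro ⟨x, hx⟩
    have hxF : ¬ (∀ η ∈ N, η x = 0) := fun h => hx.2 (hνF x h)
    push_neg at hxF
    obtain ⟨η, hηN, hηx⟩ := hxF
    obtain ⟨η₁, h₁N, η₂, h₂N, h₁p, h₂p, hde⟩ := hN.2.2.2.1 η hηN
    have hne12 : η₁ x ≠ η₂ x := by
      intro h
      apply hηx
      rw [hde]
      simp [Pi.sub_apply, h]
    rcases lt_or_gt_of_ne hne12 with h | h
    · exact ⟨η₂, h₂N, h₂p, lt_of_le_of_lt (h₁p x) h⟩
    · exact ⟨η₁, h₁N, h₁p, lt_of_le_of_lt (h₂p x) h⟩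
  choose ζ hζN hζpos hζpt using hζex
  have hcover : E ⊆ ⋃ i : ↥E, {y | ζ i y = ζ i (i : P)} := fun x hx =>
    mem_iUnion.2 ⟨⟨x, hx⟩, rfl⟩
  obtain ⟨t, ht⟩ := hEcomp.elim_finite_subcover _
    (fun i => (hN.1 _ (hζN i)).1.isOpen_fiber _) hcover
  have hnex : ∀ i : ↥E, ∃ m : ℕ, M' ≤ (m : ℝ) * ζ i (i : P) := by
    intro i
    obtain ⟨m, hm⟩ := exists_nat_ge (M' / ζ i (i : P))
    refine ⟨m, ?_⟩
    rw [div_le_iff₀ (hζpt i)] at hm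
    linarith
  choose mi hmi using hnex
  obtain ⟨n, hn⟩ := exists_nat_ge (M' / r₀)
  have hnr : M' ≤ (n : ℝ) * r₀ := by
    rw [div_le_iff₀ hr₀pos] at hn
    linarith
  set η := (fun x => (n : ℝ) * η₀ x) + ∑ i ∈ t, (fun x => (mi i : ℝ) * ζ i x) with hηdef
  have hηN' : η ∈ N := ideal_add hN (ideal_nsmul hN hη₀N n)
    (ideal_sum hN t _ fun i _ => ideal_nsmul hN (hζN i) (mi i))
  have hηapp : ∀ x, η x = (n : ℝ) * η₀ x + ∑ i ∈ t, (mi i : ℝ) * ζ i x := by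
    intro x
    rw [hηdef]
    simp [Finset.sum_apply]
  have hsum_nonneg : ∀ x, 0 ≤ ∑ i ∈ t, (mi i : ℝ) * ζ i x := fun x =>
    Finset.sum_nonneg fun i _ => mul_nonneg (Nat.cast_nonneg _) (hζpos i x)
  have hdom : ∀ x, ν x ≤ η x := by
    intro x
    have hηx0 : 0 ≤ η x := by
      rw [hηapp x]
      exact add_nonneg (mul_nonneg (Nat.cast_nonneg _) (hη₀pos x)) (hsum_nonneg x)
    rcases (hνpos x).eq_or_lt with h0 | h0
    · linarith
    · by_cases hxC : x ∈ C ∪ C₀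
      · have hxE : x ∈ E := ⟨hxC, h0.ne'⟩
        obtain ⟨i, hit, hxi⟩ := mem_iUnion₂.1 (ht hxE)
        have hxi' : ζ i x = ζ i (i : P) := hxi
        have h1 : M' ≤ (mi i : ℝ) * ζ i x := by
          rw [hxi']
          exact hmi i
        have h2 : (mi i : ℝ) * ζ i x ≤ ∑ j ∈ t, (mi j : ℝ) * ζ j x :=
          Finset.single_le_sum (f := fun j => (mi j : ℝ) * ζ j x)
            (fun j _ => mul_nonneg (Nat.cast_nonneg _) (hζpos j x)) hit
        have h3 : 0 ≤ (n : ℝ) * η₀ x := mul_nonneg (Nat.cast_nonneg _) (hη₀pos x)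
        have := hνM x
        rw [hηapp x]
        linarith
      · have hxC' : x ∉ C := fun h => hxC (Or.inl h)
        have hxC₀ : x ∉ C₀ := fun h => hxC (Or.inr h)
        have h1 : ν x - c = 0 := image_eq_zero_of_notMem_tsupport (f := fun x => ν x - c) hxC'
        have h2 : η₀ x - r₀ = 0 :=
          image_eq_zero_of_notMem_tsupport (f := fun x => η₀ x - r₀) hxC₀
        have h3 : c ≤ M' := le_max_right _ _
        have h4 := hsum_nonneg x
        rw [hηapp x]
        nlinarith
  exact hN.2.2.2.2 η hηN' ν ⟨lcν, valν, c, hcΔ, hsν, hiν⟩ hνpos hdom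


end AuxGamma

/-- With a measure-preserving action of a discrete group `H` on `P` having no
nonempty compact invariant subsets, the map `F ↦ N_F = {η ∈ Γ : η|_F = 0}` is a
bijection from compact subsets of `P` onto nonzero order ideals of `(Γ, Γ₊)`. -/
theorem gamma_order_ideals_bijection
    {P H : Type*} [TopologicalSpace P] [T2Space P] [LocallyCompactSpace P]
    [SecondCountableTopology P] [TotallyDisconnectedSpace P] [NoncompactSpace P]
    [MeasurableSpace P] [BorelSpace P]
    [Group H] [MulAction H P]
    (hHcont : ∀ h : H, Continuous fun x : P => h • x)
    (μ : Measure P)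
    (hμpos : ∀ U : Set P, IsOpen U → U.Nonempty → 0 < μ U)
    (hμfin : ∀ K : Set P, IsCompact K → μ K ≠ ⊤)
    (hμinv : ∀ h : H, ∀ s : Set P, μ ((fun x : P => h • x) '' s) = μ s)
    (hnoinv : ¬ ∃ K : Set P, K.Nonempty ∧ IsCompact K ∧
      ∀ h : H, (fun x : P => h • x) '' K = K)
    (L : ℕ → Set P) (hLmono : Monotone L)
    (hL : ∀ n, IsCompact (L n) ∧ IsOpen (L n) ∧ (L n).Nonempty)
    (hLunion : (⋃ n, L n) = Set.univ)
    (Δ : AddSubgroup ℝ) (hΔctble : Countable Δ) (hΔone : (1 : ℝ) ∈ Δ)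
    (hΔmul : ∀ r ∈ Δ, ∀ K : Set P, IsCompact K → IsOpen K → (μ K).toReal * r ∈ Δ)
    (hΔdiv : ∀ r ∈ Δ, ∀ n : ℕ, ((μ (L n)).toReal)⁻¹ * r ∈ Δ) :
    -- each `N_F` is a nonzero order ideal
    (∀ F : Set P, IsCompact F →
      IsOrderIdealGamma μ Δ {η : P → ℝ | MemGamma μ Δ η ∧ ∀ x ∈ F, η x = 0} ∧
      ∃ η : P → ℝ, η ∈ {η : P → ℝ | MemGamma μ Δ η ∧ ∀ x ∈ F, η x = 0} ∧ η ≠ 0) ∧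
    -- injectivity of `F ↦ N_F`
    (∀ F₁ F₂ : Set P, IsCompact F₁ → IsCompact F₂ →
      {η : P → ℝ | MemGamma μ Δ η ∧ ∀ x ∈ F₁, η x = 0} =
        {η : P → ℝ | MemGamma μ Δ η ∧ ∀ x ∈ F₂, η x = 0} → F₁ = F₂) ∧
    -- surjectivity onto nonzero order ideals
    (∀ N : Set (P → ℝ), IsOrderIdealGamma μ Δ N → (∃ η ∈ N, η ≠ (0 : P → ℝ)) →
      ∃ F : Set P, IsCompact F ∧
        N = {η : P → ℝ | MemGamma μ Δ η ∧ ∀ x ∈ F, η x = 0}) := by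
  refine ⟨?_, ?_, ?_⟩
  · -- each N_F is a nonzero order ideal
    intro F hF
    constructor
    · refine ⟨fun η hη => hη.1, ⟨memGamma_zero, fun x _ => rfl⟩, ?_, ?_, ?_⟩
      · rintro η₁ ⟨h₁m, h₁F⟩ η₂ ⟨h₂m, h₂F⟩
        exact ⟨h₁m.sub' hμfin h₂m, fun x hx => by
          simp [Pi.sub_apply, h₁F x hx, h₂F x hx]⟩
      · rintro η ⟨hm, hF0⟩
        obtain ⟨ν₁, ν₂, h₁m, h₂m, h₁F, h₂F, h₁p, h₂p, heq⟩ :=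
          decomp hμpos hμfin hLmono hL hLunion hΔone hΔmul hΔdiv hF hm hF0
        exact ⟨ν₁, ⟨h₁m, h₁F⟩, ν₂, ⟨h₂m, h₂F⟩, h₁p, h₂p, heq⟩
      · rintro η ⟨hm, hF0⟩ ν hνm hνp hνle
        refine ⟨hνm, fun x hx => le_antisymm ?_ (hνp x)⟩
        rw [← hF0 x hx]
        exact hνle x
    · obtain ⟨x₀, hx₀⟩ := my_compl_nonempty hF
      obtain ⟨η, hηm, hηF, hηpos⟩ := exists_pos_at hμpos hμfin hΔone hΔmul hF hx₀
      refine ⟨η, ⟨hηm, hηF⟩, fun h => ?_⟩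
      rw [h] at hηpos
      simp at hηpos
  · -- injectivity
    have key : ∀ F₁ F₂ : Set P, IsCompact F₁ → IsCompact F₂ →
        {η : P → ℝ | MemGamma μ Δ η ∧ ∀ x ∈ F₁, η x = 0} =
        {η : P → ℝ | MemGamma μ Δ η ∧ ∀ x ∈ F₂, η x = 0} → F₁ ⊆ F₂ := by
      intro F₁ F₂ h₁ h₂ hset x hx
      by_contra hx₂
      obtain ⟨η, hηm, hηF, hηpos⟩ := exists_pos_at hμpos hμfin hΔone hΔmul h₂ hx₂
      have hmem : η ∈ {η : P → ℝ | MemGamma μ Δ η ∧ ∀ x ∈ F₁, η x = 0} := by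
        rw [hset]
        exact ⟨hηm, hηF⟩
      have := hmem.2 x hx
      linarith
    intro F₁ F₂ h₁ h₂ hset
    exact le_antisymm (key F₁ F₂ h₁ h₂ hset) (key F₂ F₁ h₂ h₁ hset.symm)
  · -- surjectivity
    intro N hN hne
    obtain ⟨η₀, hη₀N, hη₀pos, r₀, hr₀pos, hs₀⟩ := exists_pos_infty hμpos hμfin hN hne
    set F := {x : P | ∀ η ∈ N, η x = 0} with hFdef
    have hFclosed : IsClosed F := by
      have : F = ⋂ η ∈ N, η ⁻¹' {0} := by
        ext x
        simp [hFdef]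
      rw [this]
      exact isClosed_biInter fun η hη =>
        IsClosed.preimage (hN.1 η hη).1.continuous isClosed_singleton
    have hFsub : F ⊆ tsupport (fun x => η₀ x - r₀) := by
      intro x hx
      apply subset_tsupport
      simp only [Function.mem_support]
      have h0 : η₀ x = 0 := hx η₀ hη₀N
      rw [h0]
      simpa using hr₀pos.ne'
    have hFcomp : IsCompact F := IsCompact.of_isClosed_subset hs₀ hFclosed hFsub
    refine ⟨F, hFcomp, ?_⟩
    ext ν
    constructor
    · intro hνN
      exact ⟨hN.1 ν hνN, fun x hx => hx ν hνN⟩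
    · rintro ⟨hνm, hνF⟩
      obtain ⟨ν₁, ν₂, h₁m, h₂m, h₁F, h₂F, h₁p, h₂p, heq⟩ :=
        decomp hμpos hμfin hLmono hL hLunion hΔone hΔmul hΔdiv hFcomp hνm hνF
      have h₁N : ν₁ ∈ N := dominated_mem hμpos hμfin hN hne h₁m h₁p (fun x hx => h₁F x hx)
      have h₂N : ν₂ ∈ N := dominated_mem hμpos hμfin hN hne h₂m h₂p (fun x hx => h₂F x hx)
      rw [heq]
      exact hN.2.2.1 ν₁ h₁N ν₂ h₂N
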